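/- arXiv:1702.07584 — 4 statements merged into one kernel-verified Lean document; each statement's English description precedes it below -/
import Mathlib

section
/- Let n ≥ 1 and κ ∈ [−1/n, +∞) with κ ≠ 0. Then for every symmetric positive definite n×n real matrix M one has (1/κ)·det(M)^{−κ} ≥ 1/κ − tr(M − I); equivalently, 𝒢_κ(M) := (1/κ)·det(M)^{−κ} − 1/κ + tr(M − I) ≥ 0. -/
open Matrix

lemma trace_eq_sum_eigenvalues' {n : ℕ} {M : Matrix (Fin n) (Fin n) ℝ}
    (hM : M.IsHermitian) : M.trace = ∑ i, hM.eigenvalues i := by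
  conv_lhs => rw [hM.spectral_theorem]
  rw [Unitary.conjStarAlgAut_apply, Matrix.trace_mul_comm, ← mul_assoc, Unitary.coe_star_mul_self, one_mul,
    Matrix.trace_diagonal]
  simp

/-- for `n ≥ 1`, `κ ∈ [-1/n, ∞)`, `κ ≠ 0` and `M` a symmetric positive
definite `n × n` real matrix, `(1/κ) * det M ^ (-κ) ≥ 1/κ - tr (M - I)`. -/
theorem det_rpow_tangent_at_id (n : ℕ) (hn : 1 ≤ n) (κ : ℝ)
    (hκl : -(1 / (n : ℝ)) ≤ κ) (hκ0 : κ ≠ 0)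
    (M : Matrix (Fin n) (Fin n) ℝ) (hM : M.PosDef) :
    (1 / κ) * M.det ^ (-κ) ≥ 1 / κ - (M - 1).trace := by
  have hHerm := hM.isHermitian
  set x := hHerm.eigenvalues with hx
  have hxpos : ∀ i, 0 < x i := hM.eigenvalues_pos
  have hd : (0 : ℝ) < M.det := hM.det_pos
  have hn0 : (0 : ℝ) < (n : ℝ) := by exact_mod_cast hn
  have hdet : M.det = ∏ i, x i := by
    simpa using hHerm.det_eq_prod_eigenvalues
  have htr : M.trace = ∑ i, x i := trace_eq_sum_eigenvalues' hHerm
  have htrsub : (M - 1).trace = M.trace - n := by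
    rw [Matrix.trace_sub, Matrix.trace_one]; simp
  set t := M.trace with ht
  have htpos : 0 < t := by
    rw [htr]
    exact Finset.sum_pos (fun i _ => hxpos i) ⟨⟨0, hn⟩, Finset.mem_univ _⟩
  rw [htrsub, ge_iff_le]
  rcases lt_or_gt_of_ne hκ0 with hκneg | hκpos
  · -- κ < 0 : use AM-GM plus Bernoulli
    set u : ℝ := t / n with hu
    have hupos : 0 < u := div_pos htpos hn0
    have hamgm : M.det ^ ((n : ℝ)⁻¹) ≤ u := by
      rw [hdet, ← Real.finset_prod_rpow _ _ (fun i _ => (hxpos i).le)]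
      calc ∏ i, x i ^ ((n : ℝ)⁻¹)
          ≤ ∑ i, (n : ℝ)⁻¹ * x i := by
            apply Real.geom_mean_le_arith_mean_weighted
            · intro i _; positivity
            · simp [Finset.sum_const, mul_inv_cancel₀ hn0.ne']
            · intro i _; exact (hxpos i).le
        _ = u := by
            rw [← Finset.mul_sum, ← htr, hu, div_eq_inv_mul]
    set p : ℝ := -(n : ℝ) * κ with hp
    have hp0 : 0 < p := by
      rw [hp]; nlinarith
    have hp1 : p ≤ 1 := by
      rw [hp]
      have : -(1 / (n : ℝ)) ≤ κ := hκl
      rw [neg_mul, neg_le]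
      calc -(1:ℝ) ≤ (n:ℝ) * (-(1 / (n:ℝ))) := by
            rw [mul_neg, mul_one_div, div_self hn0.ne']
        _ ≤ (n:ℝ) * κ := by nlinarith
    have hkey : M.det ^ (-κ) ≤ 1 + p * (u - 1) := by
      have h1 : M.det ^ (-κ) = (M.det ^ ((n : ℝ)⁻¹)) ^ p := by
        rw [← Real.rpow_mul hd.le]
        congr 1
        rw [hp]; field_simp
      rw [h1]
      calc (M.det ^ ((n : ℝ)⁻¹)) ^ p ≤ u ^ p :=
            Real.rpow_le_rpow (Real.rpow_nonneg hd.le _) hamgm hp0.le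
        _ ≤ 1 + p * (u - 1) := by
            have := rpow_one_add_le_one_add_mul_self
              (s := u - 1) (by linarith) hp0.le hp1
            simpa using this
    have hnu : (n : ℝ) * u = t := by
      rw [hu]; field_simp
    have h2 : 1 / κ * (1 + p * (u - 1)) ≤ 1 / κ * M.det ^ (-κ) := by
      exact mul_le_mul_of_nonpos_left hkey
        (le_of_lt (div_neg_of_pos_of_neg one_pos hκneg))
    refine le_trans (le_of_eq ?_) h2
    rw [hp, hu]
    field_simp
    ring
  · -- κ > 0 : use exp x ≥ 1 + x and log x ≤ x - 1
    have hlog : Real.log M.det ≤ t - n := by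
      rw [hdet, Real.log_prod (fun i _ => (hxpos i).ne'), htr]
      have : ∑ i, Real.log (x i) ≤ ∑ i, (x i - 1) :=
        Finset.sum_le_sum fun i _ => Real.log_le_sub_one_of_pos (hxpos i)
      simpa [Finset.sum_sub_distrib] using this
    have hexp : 1 + (-κ) * Real.log M.det ≤ M.det ^ (-κ) := by
      rw [Real.rpow_def_of_pos hd]
      have := Real.add_one_le_exp (Real.log M.det * -κ)
      linarith
    have h3 : 1 / κ * (1 + (-κ) * Real.log M.det) ≤ 1 / κ * M.det ^ (-κ) :=
      mul_le_mul_of_nonneg_left hexp (by positivity)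
    refine le_trans ?_ h3
    have : 1 / κ * (1 + (-κ) * Real.log M.det) = 1 / κ - Real.log M.det := by
      field_simp
      ring
    rw [this]
    linarith
end

section
/- Let n ≥ 1 and β > 0. There is a numerical constant c > 0 (one may take c = 3/10) such that for every symmetric positive definite n×n real matrix M, with μ₁, …, μ_n the eigenvalues of M − I, one has β·det(M)^{−1/β} − β + tr(M − I) ≥ c·∑_{i=1}^n min{μ_i², |μ_i|}. -/
open Matrix

private lemma ptwise_bound (μ : ℝ) (hμ : -1 < μ) :
    (1/6 : ℝ) * min (μ^2) |μ| ≤ μ - Real.log (1+μ) := by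
  have h1 : (0:ℝ) < 1 + μ := by linarith
  set s := Real.sqrt (1+μ) with hsdef
  have hs0 : 0 < s := Real.sqrt_pos.mpr h1
  have hs2 : s^2 = 1+μ := Real.sq_sqrt h1.le
  have hlog : Real.log (1+μ) ≤ 2*(s-1) := by
    have he : Real.log (1+μ) = 2 * Real.log s := by
      rw [← hs2, Real.log_pow]; push_cast; ring
    have h2 : Real.log s ≤ s - 1 := Real.log_le_sub_one_of_pos hs0
    linarith
  have key : (s-1)^2 ≤ μ - Real.log (1+μ) := by nlinarith
  have main : (1/6 : ℝ) * min (μ^2) |μ| ≤ (s-1)^2 := by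
    rcases le_total μ 1 with h | h
    · have habs : |μ| ≤ 1 := abs_le.mpr ⟨hμ.le, h⟩
      have hmin : min (μ^2) |μ| = μ^2 := min_eq_left (by nlinarith [abs_nonneg μ, sq_abs μ])
      rw [hmin]
      have h32 : s ≤ 3/2 := by nlinarith
      nlinarith [mul_nonneg (sq_nonneg (s-1)) (by nlinarith : (0:ℝ) ≤ 2 - s^2),
        mul_nonneg (sq_nonneg (s-1)) (by nlinarith : (0:ℝ) ≤ 3 - 2*s)]
    · have habs : |μ| = μ := abs_of_nonneg (by linarith)
      have hmin : min (μ^2) |μ| = |μ| := min_eq_right (by nlinarith)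
      rw [hmin, habs]
      have h75 : 7/5 ≤ s := by nlinarith [sq_nonneg (s - 7/5)]
      nlinarith [mul_nonneg (by linarith : (0:ℝ) ≤ 5*s-7) (by linarith : (0:ℝ) ≤ s-1)]
  linarith

private lemma rpow_log_bound (x β : ℝ) (hx : 0 < x) (hβ : 0 < β) :
    -Real.log x ≤ β * x ^ (-(1/β)) - β := by
  rw [Real.rpow_def_of_pos hx]
  have h := Real.add_one_le_exp (Real.log x * (-(1/β)))
  have h2 : β * (Real.log x * (-(1/β)) + 1) ≤ β * Real.exp (Real.log x * (-(1/β))) :=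
    mul_le_mul_of_nonneg_left h hβ.le
  have h3 : β * (Real.log x * (-(1/β)) + 1) = -Real.log x + β := by
    field_simp
  linarith

/-- there is a numerical constant `c > 0` (e.g. `c = 3/10`) such that for
every `n ≥ 1`, `β > 0` and every symmetric positive definite `n × n` real matrix `M`,
with `μ₁, …, μ_n` the eigenvalues of `M - I`,
`β * det M ^ (-1/β) - β + tr (M - I) ≥ c * ∑ i, min (μ i ^ 2) |μ i|`. -/
theorem quantitative_det_trace_case1 :
    ∃ c : ℝ, 0 < c ∧
      ∀ (n : ℕ), 1 ≤ n → ∀ β : ℝ, 0 < β →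
        ∀ M : Matrix (Fin n) (Fin n) ℝ, ∀ hM : M.PosDef,
          β * M.det ^ (-(1 / β)) - β + (M - 1).trace ≥
            c * ∑ i, min ((hM.1.sub isHermitian_one).eigenvalues i ^ 2)
              |(hM.1.sub isHermitian_one).eigenvalues i| := by
  refine ⟨1/6, by norm_num, ?_⟩
  intro n hn β hβ M hM
  have hB : (M - 1).IsHermitian := hM.1.sub isHermitian_one
  show β * M.det ^ (-(1 / β)) - β + (M - 1).trace ≥
      1/6 * ∑ i, min (hB.eigenvalues i ^ 2) |hB.eigenvalues i|
  set d := hB.eigenvalues with hd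
  set U : Matrix (Fin n) (Fin n) ℝ := ↑hB.eigenvectorUnitary with hU
  have hUU : U * star U = 1 := (Matrix.mem_unitaryGroup_iff).mp hB.eigenvectorUnitary.2
  have hUU' : star U * U = 1 := (Matrix.mem_unitaryGroup_iff').mp hB.eigenvectorUnitary.2
  have hspec : (M - 1) = U * diagonal d * star U := by
    have := hB.spectral_theorem
    simpa using this
  have htr : (M - 1).trace = ∑ i, d i := by
    rw [hspec, Matrix.trace_mul_cycle, hUU', one_mul, trace_diagonal]
  have hdet : M.det = ∏ i, (1 + d i) := by
    have hM1 : M = U * diagonal (fun i => d i + 1) * star U := by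
      have hdiag : diagonal (fun i => d i + 1) = diagonal d + 1 := by
        rw [← diagonal_one, diagonal_add]
      have hexp : U * diagonal (fun i => d i + 1) * star U
          = U * diagonal d * star U + U * star U := by
        rw [hdiag]; noncomm_ring
      rw [hexp, ← hspec, hUU]
      abel
    rw [hM1, det_mul_right_comm, hUU, one_mul, det_diagonal]
    exact Finset.prod_congr rfl fun i _ => by ring
  have hpos : ∀ i, 0 < 1 + d i := by
    intro i
    have hv := hB.mulVec_eigenvectorBasis i
    set v : Fin n → ℝ := ⇑(hB.eigenvectorBasis i) with hvd
    have hv0 : v ≠ 0 := by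
      intro h
      exact hB.eigenvectorBasis.orthonormal.ne_zero i (by ext j; exact congrFun h j)
    have hp := hM.dotProduct_mulVec_pos hv0
    have hvv : 0 < v ⬝ᵥ v := by
      have h1 : (0:ℝ) ≤ v ⬝ᵥ v := Finset.sum_nonneg fun j _ => mul_self_nonneg _
      rcases h1.lt_or_eq with h | h
      · exact h
      · exact absurd (dotProduct_self_eq_zero.mp h.symm) hv0
    have hMv : M *ᵥ v = (d i) • v + v := by
      have hM' : M = (M - 1) + 1 := by abel
      rw [hM', add_mulVec, one_mulVec, hv]
    rw [star_trivial, hMv, dotProduct_add, dotProduct_smul, smul_eq_mul] at hp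
    nlinarith [hp, hvv]
  -- the log bound
  have hdetpos : 0 < M.det := hM.det_pos
  have hlb : -Real.log M.det ≤ β * M.det ^ (-(1/β)) - β := rpow_log_bound _ _ hdetpos hβ
  have hlogdet : Real.log M.det = ∑ i, Real.log (1 + d i) := by
    rw [hdet]
    exact Real.log_prod fun i _ => (hpos i).ne'
  have hsum : (1/6 : ℝ) * ∑ i, min (d i ^ 2) |d i| ≤ ∑ i, (d i - Real.log (1 + d i)) := by
    rw [Finset.mul_sum]
    exact Finset.sum_le_sum fun i _ => ptwise_bound (d i) (by linarith [hpos i])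
  have hsum' : ∑ i, (d i - Real.log (1 + d i)) = (∑ i, d i) - Real.log M.det := by
    rw [hlogdet, Finset.sum_sub_distrib]
  rw [ge_iff_le, htr]
  calc (1/6 : ℝ) * ∑ i, min (d i ^ 2) |d i|
      ≤ (∑ i, d i) - Real.log M.det := by rw [← hsum']; exact hsum
    _ ≤ β * M.det ^ (-(1/β)) - β + ∑ i, d i := by linarith
end

section
/- For every real number t > −1 one has log(1 + t) ≤ t − (3/10)·min{t², |t|}. -/
private lemma hasDerivAt_aux_f (x : ℝ) (hx : -1 < x) :
    HasDerivAt (fun y : ℝ => y - 3/10 * y^2 - Real.log (1+y))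
      (1 - 3/5*x - 1/(1+x)) x := by
  have h1 : HasDerivAt (fun y : ℝ => 1 + y) 1 x := by
    simpa using (hasDerivAt_id x).const_add 1
  have h2 : HasDerivAt (fun y : ℝ => Real.log (1+y)) (1/(1+x)) x := by
    have hne : (1:ℝ) + x ≠ 0 := by linarith
    have : HasDerivAt (fun y : ℝ => Real.log (1+y)) ((1+x)⁻¹ * 1) x := (Real.hasDerivAt_log hne).comp x h1
    simpa [one_div] using this
  have hp : HasDerivAt (fun y : ℝ => y^2) (2*x) x := by
    simpa using hasDerivAt_pow 2 x
  have h3 : HasDerivAt (fun y : ℝ => y - 3/10 * y^2) (1 - 3/5*x) x := by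
    have : HasDerivAt (fun y : ℝ => y - 3/10 * y^2) (1 - 3/10*(2*x)) x := (hasDerivAt_id x).sub (hp.const_mul (3/10))
    convert this using 1
    ring
  exact h3.sub h2

private lemma hasDerivAt_aux_g (x : ℝ) (hx : -1 < x) :
    HasDerivAt (fun y : ℝ => 7/10 * y - Real.log (1+y))
      (7/10 - 1/(1+x)) x := by
  have h1 : HasDerivAt (fun y : ℝ => 1 + y) 1 x := by
    simpa using (hasDerivAt_id x).const_add 1
  have h2 : HasDerivAt (fun y : ℝ => Real.log (1+y)) (1/(1+x)) x := by
    have hne : (1:ℝ) + x ≠ 0 := by linarith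
    have : HasDerivAt (fun y : ℝ => Real.log (1+y)) ((1+x)⁻¹ * 1) x := (Real.hasDerivAt_log hne).comp x h1
    simpa [one_div] using this
  have h3 : HasDerivAt (fun y : ℝ => 7/10 * y) (7/10) x := by
    simpa using (hasDerivAt_id x).const_mul (7/10)
  exact h3.sub h2

private lemma deriv_f_eq (x : ℝ) (hx : -1 < x) :
    1 - 3/5*x - 1/(1+x) = x*(2-3*x)/(5*(1+x)) := by
  have hne : (1:ℝ) + x ≠ 0 := by linarith
  field_simp
  ring

private lemma key1 (t : ℝ) (ht : -1 < t) (ht1 : t ≤ 1) :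
    Real.log (1+t) ≤ t - 3/10 * t^2 := by
  set f : ℝ → ℝ := fun y => y - 3/10 * y^2 - Real.log (1+y) with hf
  have hf0 : f 0 = 0 := by simp [hf]
  have hcont : ∀ x : ℝ, -1 < x → ContinuousAt f x := fun x hx =>
    (hasDerivAt_aux_f x hx).continuousAt
  rcases le_or_gt t 0 with h0 | h0
  · -- antitone on [t, 0]
    have hD : Convex ℝ (Set.Icc t 0) := convex_Icc t 0
    have hsub : ∀ x ∈ Set.Icc t 0, -1 < x := fun x hx => lt_of_lt_of_le ht hx.1
    have hC : ContinuousOn f (Set.Icc t 0) := fun x hx =>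
      (hcont x (hsub x hx)).continuousWithinAt
    have hanti : AntitoneOn f (Set.Icc t 0) := by
      apply antitoneOn_of_deriv_nonpos hD hC
      · intro x hx
        rw [interior_Icc] at hx
        exact ((hasDerivAt_aux_f x (by linarith [hx.1])).differentiableAt.differentiableWithinAt)
      · intro x hx
        rw [interior_Icc] at hx
        have hx1 : -1 < x := by linarith [hx.1]
        rw [(hasDerivAt_aux_f x hx1).deriv, deriv_f_eq x hx1]
        apply div_nonpos_of_nonpos_of_nonneg
        · nlinarith [hx.1, hx.2]
        · nlinarith
    have h := hanti (Set.left_mem_Icc.2 h0) (Set.right_mem_Icc.2 h0) h0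
    rw [hf0] at h
    have h' : 0 ≤ t - 3/10 * t^2 - Real.log (1+t) := h
    linarith
  · rcases le_or_gt t (2/3) with h23 | h23
    · -- monotone on [0, t]
      have hD : Convex ℝ (Set.Icc 0 t) := convex_Icc 0 t
      have hsub : ∀ x ∈ Set.Icc (0:ℝ) t, -1 < x := fun x hx => by
        have := hx.1; linarith
      have hC : ContinuousOn f (Set.Icc 0 t) := fun x hx =>
        (hcont x (hsub x hx)).continuousWithinAt
      have hmono : MonotoneOn f (Set.Icc 0 t) := by
        apply monotoneOn_of_deriv_nonneg hD hC
        · intro x hx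
          rw [interior_Icc] at hx
          exact ((hasDerivAt_aux_f x (by linarith [hx.1])).differentiableAt.differentiableWithinAt)
        · intro x hx
          rw [interior_Icc] at hx
          have hx1 : -1 < x := by linarith [hx.1]
          rw [(hasDerivAt_aux_f x hx1).deriv, deriv_f_eq x hx1]
          apply div_nonneg
          · nlinarith [hx.1, hx.2]
          · nlinarith [hx.1]
      have h := hmono (Set.left_mem_Icc.2 h0.le) (Set.right_mem_Icc.2 h0.le) h0.le
      rw [hf0] at h
      have h' : 0 ≤ t - 3/10 * t^2 - Real.log (1+t) := h
      linarith
    · -- antitone on [t, 1], compare with f 1 ≥ 0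
      have hD : Convex ℝ (Set.Icc t 1) := convex_Icc t 1
      have hsub : ∀ x ∈ Set.Icc t 1, -1 < x := fun x hx => lt_of_lt_of_le ht hx.1
      have hC : ContinuousOn f (Set.Icc t 1) := fun x hx =>
        (hcont x (hsub x hx)).continuousWithinAt
      have hanti : AntitoneOn f (Set.Icc t 1) := by
        apply antitoneOn_of_deriv_nonpos hD hC
        · intro x hx
          rw [interior_Icc] at hx
          exact ((hasDerivAt_aux_f x (by linarith [hx.1])).differentiableAt.differentiableWithinAt)
        · intro x hx
          rw [interior_Icc] at hx
          have hx1 : -1 < x := by linarith [hx.1]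
          rw [(hasDerivAt_aux_f x hx1).deriv, deriv_f_eq x hx1]
          apply div_nonpos_of_nonpos_of_nonneg
          · nlinarith [hx.1, hx.2, h23]
          · nlinarith [hx.1]
      have h1mem : (1:ℝ) ∈ Set.Icc t 1 := Set.right_mem_Icc.2 ht1
      have htmem : t ∈ Set.Icc t 1 := Set.left_mem_Icc.2 ht1
      have hle : f 1 ≤ f t := hanti htmem h1mem ht1
      have hf1 : 0 ≤ f 1 := by
        have hlog2 : Real.log 2 < 0.6931471808 := Real.log_two_lt_d9
        have : f 1 = 1 - 3/10 - Real.log 2 := by norm_num [hf]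
        rw [this]; linarith
      have h' : 0 ≤ t - 3/10 * t^2 - Real.log (1+t) := le_trans hf1 hle
      linarith

private lemma key2 (t : ℝ) (ht1 : 1 ≤ t) :
    Real.log (1+t) ≤ 7/10 * t := by
  set g : ℝ → ℝ := fun y => 7/10 * y - Real.log (1+y) with hg
  have hD : Convex ℝ (Set.Icc 1 t) := convex_Icc 1 t
  have hsub : ∀ x ∈ Set.Icc (1:ℝ) t, -1 < x := fun x hx => by
    have := hx.1; linarith
  have hC : ContinuousOn g (Set.Icc 1 t) := fun x hx =>
    ((hasDerivAt_aux_g x (hsub x hx)).continuousAt).continuousWithinAt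
  have hmono : MonotoneOn g (Set.Icc 1 t) := by
    apply monotoneOn_of_deriv_nonneg hD hC
    · intro x hx
      rw [interior_Icc] at hx
      exact ((hasDerivAt_aux_g x (by linarith [hx.1])).differentiableAt.differentiableWithinAt)
    · intro x hx
      rw [interior_Icc] at hx
      have hx1 : (1:ℝ) < x := hx.1
      rw [(hasDerivAt_aux_g x (by linarith)).deriv]
      have h2 : (0:ℝ) < 1 + x := by linarith
      have : 1/(1+x) ≤ 1/2 := by
        rw [div_le_div_iff₀ h2 (by norm_num)]; linarith
      linarith
  have hle : g 1 ≤ g t := hmono (Set.left_mem_Icc.2 ht1) (Set.right_mem_Icc.2 ht1) ht1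
  have hg1 : 0 ≤ g 1 := by
    have hlog2 : Real.log 2 < 0.6931471808 := Real.log_two_lt_d9
    have : g 1 = 7/10 - Real.log 2 := by norm_num [hg]
    rw [this]; linarith
  have h' : 0 ≤ 7/10 * t - Real.log (1+t) := le_trans hg1 hle
  linarith

/-- For every real `t > -1`,
`log (1 + t) ≤ t - (3/10) * min (t^2) |t|`. -/
theorem log_le_sub_min_sq_abs (t : ℝ) (ht : -1 < t) :
    Real.log (1 + t) ≤ t - (3 / 10) * min (t ^ 2) |t| := by
  rcases le_or_gt t 1 with h1 | h1
  · have habs : |t| ≤ 1 := abs_le.2 ⟨ht.le, h1⟩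
    have hmin : min (t ^ 2) |t| = t ^ 2 := by
      apply min_eq_left
      nlinarith [sq_abs t, mul_le_mul_of_nonneg_right habs (abs_nonneg t), abs_nonneg t]
    rw [hmin]
    exact key1 t ht h1
  · have hmin : min (t ^ 2) |t| = |t| := by
      apply min_eq_right
      have habs : |t| = t := abs_of_pos (by linarith)
      rw [habs]
      nlinarith
    rw [hmin, abs_of_pos (by linarith : (0:ℝ) < t)]
    have := key2 t h1.le
    linarith
end

section
/- For all real numbers s > 0 and t > 0 one has log(s) ≤ log(t) + (s − t)/t − (s − t)²/(2·max{s, t}²). -/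
open Real Set

/-- Auxiliary: for `0 < x ≤ 1`, `log x ≤ x - 1 - (x-1)^2/2`. -/
lemma aux_logA : ∀ x : ℝ, 0 < x → x ≤ 1 → Real.log x ≤ x - 1 - (x - 1) ^ 2 / 2 := by
  intro x hx hx1
  set f : ℝ → ℝ := fun y => y - 1 - (y - 1) ^ 2 / 2 - Real.log y with hf
  have hder : ∀ y : ℝ, 0 < y → HasDerivAt f (1 - (y - 1) - y⁻¹) y := by
    intro y hy
    have h1 : HasDerivAt (fun z : ℝ => z - 1) 1 y := (hasDerivAt_id y).sub_const 1
    have h2 : HasDerivAt (fun z : ℝ => (z - 1) ^ 2 / 2) (y - 1) y := by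
      have := (h1.pow 2).div_const 2
      exact this.congr_deriv (by push_cast; ring)
    exact (h1.sub h2).sub (Real.hasDerivAt_log hy.ne')
  have hanti : AntitoneOn f (Set.Ioi (0:ℝ)) := by
    apply antitoneOn_of_deriv_nonpos (convex_Ioi 0)
    · intro y hy
      exact ((hder y hy).continuousAt).continuousWithinAt
    · intro y hy
      rw [interior_Ioi] at hy
      exact ((hder y hy).differentiableAt).differentiableWithinAt
    · intro y hy
      rw [interior_Ioi] at hy
      have hy0 : y ≠ 0 := ne_of_gt (Set.mem_Ioi.mp hy)
      have hypos : (0:ℝ) < y := Set.mem_Ioi.mp hy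
      rw [(hder y hy).deriv]
      have h1 : 1 - (y - 1) - y⁻¹ = -((y - 1) ^ 2 / y) := by field_simp; ring
      rw [h1]
      exact neg_nonpos.mpr (by positivity)
  have hfx : f 1 ≤ f x := hanti (Set.mem_Ioi.mpr hx) (Set.mem_Ioi.mpr one_pos) hx1
  have hf1 : f 1 = 0 := by simp [hf]
  rw [hf1] at hfx
  simp only [hf] at hfx
  linarith

/-- Auxiliary: for `0 < u ≤ 1`, `1 - 1/u + (1-u)^2/2 ≤ log u`. -/
lemma aux_logB : ∀ u : ℝ, 0 < u → u ≤ 1 → 1 - u⁻¹ + (1 - u) ^ 2 / 2 ≤ Real.log u := by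
  intro u hu hu1
  set g : ℝ → ℝ := fun y => Real.log y - 1 + y⁻¹ - (1 - y) ^ 2 / 2 with hg
  have hder : ∀ y : ℝ, 0 < y → HasDerivAt g (y⁻¹ + -(y^2)⁻¹ - -(1 - y)) y := by
    intro y hy
    have h0 : HasDerivAt (fun z : ℝ => Real.log z - 1) y⁻¹ y :=
      (Real.hasDerivAt_log hy.ne').sub_const 1
    have h1 : HasDerivAt (fun z : ℝ => z⁻¹) (-(y^2)⁻¹) y := hasDerivAt_inv hy.ne'
    have h2 : HasDerivAt (fun z : ℝ => (1 - z) ^ 2 / 2) (-(1 - y)) y := by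
      have hb : HasDerivAt (fun z : ℝ => 1 - z) (-1) y := by
        simpa using (hasDerivAt_id y).const_sub 1
      have := (hb.pow 2).div_const 2
      exact this.congr_deriv (by push_cast; ring)
    exact (h0.add h1).sub h2
  have hanti : AntitoneOn g (Set.Ioi (0:ℝ)) := by
    apply antitoneOn_of_deriv_nonpos (convex_Ioi 0)
    · intro y hy
      exact ((hder y hy).continuousAt).continuousWithinAt
    · intro y hy
      rw [interior_Ioi] at hy
      exact ((hder y hy).differentiableAt).differentiableWithinAt
    · intro y hy
      rw [interior_Ioi] at hy
      have hy0 : y ≠ 0 := ne_of_gt (Set.mem_Ioi.mp hy)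
      have hypos : (0:ℝ) < y := Set.mem_Ioi.mp hy
      rw [(hder y hy).deriv]
      have h1 : y⁻¹ + -(y^2)⁻¹ - -(1 - y) = -((1 - y) ^ 2 * (1 + y) / y ^ 2) := by
        field_simp; ring
      rw [h1]
      exact neg_nonpos.mpr (by positivity)
  have hgu : g 1 ≤ g u := hanti (Set.mem_Ioi.mpr hu) (Set.mem_Ioi.mpr one_pos) hu1
  have hg1 : g 1 = 0 := by simp [hg]
  rw [hg1] at hgu
  simp only [hg] at hgu
  linarith

/-- For all `s > 0` and `t > 0`,
`log s ≤ log t + (s - t)/t - (s - t)^2 / (2 * (max s t)^2)`. -/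
theorem log_le_log_add_sub_div_sub_sq (s t : ℝ) (hs : 0 < s) (ht : 0 < t) :
    Real.log s ≤ Real.log t + (s - t) / t - (s - t) ^ 2 / (2 * (max s t) ^ 2) := by
  rcases le_total s t with h | h
  · rw [max_eq_right h]
    have hx : (0:ℝ) < s / t := div_pos hs ht
    have hx1 : s / t ≤ 1 := (div_le_one ht).mpr h
    have hA := aux_logA (s / t) hx hx1
    rw [Real.log_div hs.ne' ht.ne'] at hA
    have heq : (s - t) / t - (s - t) ^ 2 / (2 * t ^ 2) = s / t - 1 - (s / t - 1) ^ 2 / 2 := by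
      field_simp
    linarith
  · rw [max_eq_left h]
    have hu : (0:ℝ) < t / s := div_pos ht hs
    have hu1 : t / s ≤ 1 := (div_le_one hs).mpr h
    have hB := aux_logB (t / s) hu hu1
    rw [Real.log_div ht.ne' hs.ne'] at hB
    have hinv : (t / s)⁻¹ = s / t := by rw [inv_div]
    rw [hinv] at hB
    have heq : (s - t) / t - (s - t) ^ 2 / (2 * s ^ 2) = s / t - 1 - (1 - t / s) ^ 2 / 2 := by
      field_simp
    linarith
end
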